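/- Let f₁,…,f_M : (Fin s → ℝ) → ℝ be measurable, square-integrable and linearly independent functions, let A be a tensor of order N and dimension M in each mode, let h be the function realized with coefficient tensor A, and let (I,J) be a partition of Fin N into disjoint subsets with I ∪ J = univ. If h(x) = Σ_{ν=1}^R g_ν(x restricted to I) · g'_ν(x restricted to J) for all x, where g₁,…,g_R and g'₁,…,g'_R are measurable square-integrable functions on ({n // n ∈ I} → (Fin s → ℝ)) and ({n // n ∈ J} → (Fin s → ℝ)) respectively, then rank ⟦A⟧_{I,J} ≤ R. -/

import Mathlib

open MeasureTheory

noncomputable section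

/-- Matricization of a tensor `A` of order `N` and dimension `M` in each mode, with
respect to a partition `(I, J)` of `Fin N` (given `I ∪ J = univ`). -/
def matricize {N M : ℕ} (A : (Fin N → Fin M) → ℝ) (I J : Finset (Fin N))
    (hU : I ∪ J = Finset.univ) :
    Matrix ({n // n ∈ I} → Fin M) ({n // n ∈ J} → Fin M) ℝ :=
  Matrix.of fun u v => A fun n =>
    if h : n ∈ I then u ⟨n, h⟩
    else v ⟨n, by
      have hn : n ∈ I ∪ J := by rw [hU]; exact Finset.mem_univ n
      exact (Finset.mem_union.mp hn).resolve_left h⟩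

/-- The function realized with coefficient tensor `A` and representation functions `f`. -/
def realized {N M s : ℕ} (f : Fin M → (Fin s → ℝ) → ℝ)
    (A : (Fin N → Fin M) → ℝ) : (Fin N → (Fin s → ℝ)) → ℝ :=
  fun x => ∑ d : Fin N → Fin M, A d * ∏ i, f (d i) (x i)


lemma li_prod_fin {κ X : Type*} [Fintype κ] [DecidableEq κ] (f : κ → X → ℝ)
    (hf : LinearIndependent ℝ f) (n : ℕ) :
    LinearIndependent ℝ (fun (u : Fin n → κ) (y : Fin n → X) => ∏ i, f (u i) (y i)) := by
  induction n with
  | zero =>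
    apply linearIndependent_unique_iff.mpr
    intro h
    have := congrFun h (fun i => i.elim0)
    simp at this
  | succ n ih =>
    rw [Fintype.linearIndependent_iff]
    intro c hc u
    have h1 : ∀ (y' : Fin n → X) (k : κ),
        (∑ u' : Fin n → κ, c (Fin.cons k u') * ∏ i, f (u' i) (y' i)) = 0 := by
      intro y' k
      refine Fintype.linearIndependent_iff.mp hf
        (fun k => ∑ u' : Fin n → κ, c (Fin.cons k u') * ∏ i, f (u' i) (y' i)) ?_ k
      funext a
      set ya : Fin (n + 1) → X := Fin.cons a y' with hya
      have h3 := congrFun hc ya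
      simp only [Finset.sum_apply, Pi.smul_apply, smul_eq_mul, Pi.zero_apply] at h3 ⊢
      rw [← h3]
      have hsum := Fintype.sum_equiv (Fin.consEquiv (fun _ : Fin (n + 1) => κ))
        (fun p : κ × (Fin n → κ) =>
          c ((Fin.consEquiv (fun _ : Fin (n + 1) => κ)) p) *
            ∏ i, f ((Fin.consEquiv (fun _ : Fin (n + 1) => κ)) p i) (ya i))
        (fun x : Fin (n + 1) → κ => c x * ∏ i, f (x i) (ya i))
        (fun p => rfl)
      rw [← hsum]
      rw [Fintype.sum_prod_type]
      refine Finset.sum_congr rfl fun k _ => ?_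
      rw [Finset.sum_mul]
      refine Finset.sum_congr rfl fun u' _ => ?_
      rw [Fin.prod_univ_succ]
      simp only [hya, Fin.consEquiv, Equiv.coe_fn_mk, Fin.cons_zero, Fin.cons_succ]
      ring
    have h2 : ∀ k : κ, ∀ u' : Fin n → κ, c (Fin.cons k u') = 0 := by
      intro k
      refine Fintype.linearIndependent_iff.mp ih (fun u' => c (Fin.cons k u')) ?_
      funext y'
      simp only [Finset.sum_apply, Pi.smul_apply, smul_eq_mul, Pi.zero_apply]
      exact h1 y' k
    have := h2 (u 0) (Fin.tail u)
    rwa [Fin.cons_self_tail] at this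

lemma li_prod {ι κ X : Type*} [Fintype ι] [Fintype κ] [DecidableEq κ] (f : κ → X → ℝ)
    (hf : LinearIndependent ℝ f) :
    LinearIndependent ℝ (fun (u : ι → κ) (y : ι → X) => ∏ i, f (u i) (y i)) := by
  classical
  set c := Fintype.card ι
  let e : Fin c ≃ ι := (Fintype.equivFin ι).symm
  let Φ : ((Fin c → X) → ℝ) →ₗ[ℝ] ((ι → X) → ℝ) :=
    { toFun := fun h => fun y => h (fun j => y (e j))
      map_add' := fun a b => rfl
      map_smul' := fun r a => rfl }
  have hΦ : Function.Injective Φ := by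
    intro a b hab
    funext w
    have := congrFun hab (fun i => w (e.symm i))
    simp only [Φ, LinearMap.coe_mk, AddHom.coe_mk] at this
    simpa [Equiv.symm_apply_apply] using this
  have base := li_prod_fin f hf c
  have base2 : LinearIndependent ℝ (fun (u : Fin c → κ) =>
      Φ (fun y : Fin c → X => ∏ i, f (u i) (y i))) :=
    base.map' Φ (LinearMap.ker_eq_bot.mpr hΦ)
  have base3 := base2.comp (fun u : ι → κ => fun j : Fin c => u (e j))
    (fun u₁ u₂ h => by
      funext i
      have := congrFun h (e.symm i)
      simpa using this)
  convert base3 using 1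
  funext u y
  show ∏ i, f (u i) (y i) = ∏ j : Fin c, f (u (e j)) (y (e j))
  exact (Equiv.prod_comp e (fun i => f (u i) (y i))).symm

/-- Splitting a tuple along a partition of the index set. -/
def splitEquiv {N M : ℕ} (I J : Finset (Fin N)) (hdisj : Disjoint I J)
    (hU : I ∪ J = Finset.univ) :
    (Fin N → Fin M) ≃ ({n // n ∈ I} → Fin M) × ({n // n ∈ J} → Fin M) where
  toFun d := (fun i => d i.1, fun j => d j.1)
  invFun p := fun n =>
    if h : n ∈ I then p.1 ⟨n, h⟩
    else p.2 ⟨n, by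
      have hn : n ∈ I ∪ J := by rw [hU]; exact Finset.mem_univ n
      exact (Finset.mem_union.mp hn).resolve_left h⟩
  left_inv d := funext fun n => by by_cases h : n ∈ I <;> simp [h]
  right_inv p := by
    refine Prod.ext ?_ ?_ <;> funext i
    · simp [i.2]
    · have : i.1 ∉ I := fun h => Finset.disjoint_left.mp hdisj h i.2
      simp [this]

theorem stmt2 (N M s : ℕ) (f : Fin M → (Fin s → ℝ) → ℝ)
    (hfm : ∀ d, Measurable (f d)) (hfL2 : ∀ d, MemLp (f d) 2 volume)
    (hfind : LinearIndependent ℝ f)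
    (A : (Fin N → Fin M) → ℝ)
    (I J : Finset (Fin N)) (hdisj : Disjoint I J) (hU : I ∪ J = Finset.univ)
    (R : ℕ)
    (g : Fin R → ({n // n ∈ I} → (Fin s → ℝ)) → ℝ)
    (g' : Fin R → ({n // n ∈ J} → (Fin s → ℝ)) → ℝ)
    (hgm : ∀ ν, Measurable (g ν)) (hgL2 : ∀ ν, MemLp (g ν) 2 volume)
    (hg'm : ∀ ν, Measurable (g' ν)) (hg'L2 : ∀ ν, MemLp (g' ν) 2 volume)
    (hdec : ∀ x : Fin N → (Fin s → ℝ),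
      realized f A x = ∑ ν, g ν (fun n => x n.1) * g' ν (fun n => x n.1)) :
    (matricize A I J hU).rank ≤ R := by
  classical
  have memJ : ∀ n : Fin N, n ∉ I → n ∈ J := fun n h => by
    have hn : n ∈ I ∪ J := by rw [hU]; exact Finset.mem_univ n
    exact (Finset.mem_union.mp hn).resolve_left h
  have notI : ∀ n : Fin N, n ∈ J → n ∉ I := fun n hn h => Finset.disjoint_left.mp hdisj h hn
  set F : ({n // n ∈ I} → Fin M) → ({n // n ∈ I} → (Fin s → ℝ)) → ℝ :=
    fun u y => ∏ i, f (u i) (y i) with hFdef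
  set G : ({n // n ∈ J} → Fin M) → ({n // n ∈ J} → (Fin s → ℝ)) → ℝ :=
    fun v z => ∏ j, f (v j) (z j) with hGdef
  have hF : LinearIndependent ℝ F := li_prod f hfind
  have hG : LinearIndependent ℝ G := li_prod f hfind
  -- the bilinear identity
  have key : ∀ (y : {n // n ∈ I} → (Fin s → ℝ)) (z : {n // n ∈ J} → (Fin s → ℝ)),
      ∑ u, ∑ v, matricize A I J hU u v * F u y * G v z = ∑ ν, g ν y * g' ν z := by
    intro y z
    set x : Fin N → (Fin s → ℝ) :=
      fun n => if h : n ∈ I then y ⟨n, h⟩ else z ⟨n, memJ n h⟩ with hx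
    have hxI : (fun n : {n // n ∈ I} => x n.1) = y := by
      funext i; simp [hx, i.2]
    have hxJ : (fun n : {n // n ∈ J} => x n.1) = z := by
      funext j; simp [hx, notI j.1 j.2]
    have hd := hdec x
    rw [hxI, hxJ] at hd
    rw [← hd, realized]
    calc ∑ u, ∑ v, matricize A I J hU u v * F u y * G v z
        = ∑ p : ({n // n ∈ I} → Fin M) × ({n // n ∈ J} → Fin M),
            matricize A I J hU p.1 p.2 * F p.1 y * G p.2 z :=
          (Fintype.sum_prod_type
            (fun p : ({n // n ∈ I} → Fin M) × ({n // n ∈ J} → Fin M) =>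
              matricize A I J hU p.1 p.2 * F p.1 y * G p.2 z)).symm
      _ = ∑ d : Fin N → Fin M, A d * ∏ i, f (d i) (x i) := by
          refine Fintype.sum_equiv (splitEquiv I J hdisj hU).symm _ _ fun p => ?_
          set d : Fin N → Fin M := (splitEquiv I J hdisj hU).symm p with hdd
          have hMA : matricize A I J hU p.1 p.2 = A d := rfl
          have hsplit : (∏ i, f (d i) (x i)) = F p.1 y * G p.2 z := by
            have huniv : (Finset.univ : Finset (Fin N)) = I ∪ J := hU.symm
            rw [show (∏ i, f (d i) (x i)) = ∏ i ∈ Finset.univ, f (d i) (x i) from rfl,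
              huniv, Finset.prod_union hdisj]
            congr 1
            · rw [← Finset.prod_coe_sort]
              refine Finset.prod_congr rfl fun i _ => ?_
              have h1 : d i.1 = p.1 i := by
                simp [hdd, splitEquiv, i.2]
              have h2 : x i.1 = y i := by
                simp [hx, i.2]
              rw [h1, h2]
            · rw [← Finset.prod_coe_sort]
              refine Finset.prod_congr rfl fun j _ => ?_
              have hj : j.1 ∉ I := notI j.1 j.2
              have h1 : d j.1 = p.2 j := by
                simp [hdd, splitEquiv, hj]
              have h2 : x j.1 = z j := by
                simp [hx, hj]
              rw [h1, h2]
          rw [hMA, hsplit]; ring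
  -- dual functionals for F
  have hlamex : ∀ b : ({n // n ∈ I} → Fin M),
      ∃ l : (({n // n ∈ I} → (Fin s → ℝ)) → ℝ) →ₗ[ℝ] ℝ,
        ∀ u, l (F u) = if u = b then 1 else 0 := by
    intro b
    obtain ⟨l, hl⟩ := LinearMap.exists_extend ((Module.Basis.span hF).coord b)
    refine ⟨l, fun u => ?_⟩
    have hFu : F u = (Submodule.span ℝ (Set.range F)).subtype ((Module.Basis.span hF) u) :=
      by rw [Module.Basis.span_apply]; rfl
    rw [hFu, ← LinearMap.comp_apply, hl, Module.Basis.coord_apply, Module.Basis.repr_self,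
      Finsupp.single_apply]
  have hmuex : ∀ b : ({n // n ∈ J} → Fin M),
      ∃ l : (({n // n ∈ J} → (Fin s → ℝ)) → ℝ) →ₗ[ℝ] ℝ,
        ∀ v, l (G v) = if v = b then 1 else 0 := by
    intro b
    obtain ⟨l, hl⟩ := LinearMap.exists_extend ((Module.Basis.span hG).coord b)
    refine ⟨l, fun v => ?_⟩
    have hGv : G v = (Submodule.span ℝ (Set.range G)).subtype ((Module.Basis.span hG) v) :=
      by rw [Module.Basis.span_apply]; rfl
    rw [hGv, ← LinearMap.comp_apply, hl, Module.Basis.coord_apply, Module.Basis.repr_self,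
      Finsupp.single_apply]
  choose lam hlam using hlamex
  choose mu hmu using hmuex
  -- extract rows
  have key2 : ∀ z, (∑ u, (∑ v, matricize A I J hU u v * G v z) • F u)
      = ∑ ν, (g' ν z) • g ν := by
    intro z
    funext y
    simp only [Finset.sum_apply, Pi.smul_apply, smul_eq_mul]
    calc ∑ u, (∑ v, matricize A I J hU u v * G v z) * F u y
        = ∑ u, ∑ v, matricize A I J hU u v * F u y * G v z := by
          refine Finset.sum_congr rfl fun u _ => ?_
          rw [Finset.sum_mul]
          exact Finset.sum_congr rfl fun v _ => by ring
      _ = ∑ ν, g ν y * g' ν z := key y z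
      _ = ∑ ν, g' ν z * g ν y := Finset.sum_congr rfl fun ν _ => mul_comm _ _
  have key3 : ∀ u z, (∑ v, matricize A I J hU u v * G v z)
      = ∑ ν, lam u (g ν) * g' ν z := by
    intro u z
    have h := congrArg (lam u) (key2 z)
    rw [map_sum, map_sum] at h
    simp only [_root_.map_smul, smul_eq_mul, hlam, mul_ite, mul_one, mul_zero,
      Finset.sum_ite_eq', Finset.mem_univ, if_true] at h
    rw [h]
    exact Finset.sum_congr rfl fun ν _ => mul_comm _ _
  have key4 : ∀ u v, matricize A I J hU u v = ∑ ν, lam u (g ν) * mu v (g' ν) := by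
    intro u v
    have hz : (∑ v', (matricize A I J hU u v') • G v') = ∑ ν, (lam u (g ν)) • g' ν := by
      funext z
      simp only [Finset.sum_apply, Pi.smul_apply, smul_eq_mul]
      exact key3 u z
    have h := congrArg (mu v) hz
    rw [map_sum, map_sum] at h
    simp only [_root_.map_smul, smul_eq_mul, hmu, mul_ite, mul_one, mul_zero,
      Finset.sum_ite_eq', Finset.mem_univ, if_true] at h
    exact h
  -- rank bound
  have hfact : matricize A I J hU =
      (Matrix.of fun u (ν : Fin R) => lam u (g ν)) *
        (Matrix.of fun (ν : Fin R) v => mu v (g' ν)) := by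
    ext u v
    rw [Matrix.mul_apply]
    exact key4 u v
  calc (matricize A I J hU).rank
      ≤ (Matrix.of fun u (ν : Fin R) => lam u (g ν)).rank := by
        rw [hfact]; exact Matrix.rank_mul_le_left _ _
    _ ≤ Fintype.card (Fin R) := Matrix.rank_le_card_width _
    _ = R := Fintype.card_fin R
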